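/- arXiv:1202.2724 — 2 statements merged into one kernel-verified Lean document; each statement's English description precedes it below -/
import Mathlib

section
/- Define p : ℕ → ℝ by p(1) = 3/4, p(2) = 1/2, and p(n+2) = (3/4) p(n+1) - (1/16) p(n). Then the formal power series sum over n ≥ 1 of p(n) z^n equals (12z - z²)/(z² - 12z + 16) as an identity of power series (equivalently, (z² - 12z + 16) * sum p(n) z^n = 12z - z² as formal power series). -/
theorem path_generating_function (p : ℕ → ℝ)
    (hp1 : p 1 = 3 / 4) (hp2 : p 2 = 1 / 2)
    (hrec : ∀ n, 1 ≤ n → p (n + 2) = (3 / 4) * p (n + 1) - (1 / 16) * p n) :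
    (PowerSeries.X ^ 2 - 12 * PowerSeries.X + 16) *
        PowerSeries.mk (fun n => if n = 0 then (0 : ℝ) else p n) =
      12 * PowerSeries.X - PowerSeries.X ^ 2 := by
  have h12 : (12 : PowerSeries ℝ) = PowerSeries.C (12 : ℝ) := (map_ofNat _ _).symm
  have h16 : (16 : PowerSeries ℝ) = PowerSeries.C (16 : ℝ) := (map_ofNat _ _).symm
  ext n
  rw [add_mul, sub_mul, h12, h16, mul_assoc]
  simp only [map_add, map_sub, PowerSeries.coeff_C_mul, PowerSeries.coeff_X_pow_mul',
    PowerSeries.coeff_mk, PowerSeries.coeff_C_mul]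
  match n with
  | 0 => norm_num
  | 1 =>
    norm_num [PowerSeries.coeff_one_X, hp1, PowerSeries.coeff_X_pow, PowerSeries.coeff_X,
      PowerSeries.coeff_C_mul, PowerSeries.coeff_X_pow_mul']
  | 2 =>
    norm_num [hp1, hp2, PowerSeries.coeff_X_pow, PowerSeries.coeff_X, PowerSeries.coeff_C_mul,
      PowerSeries.coeff_X_pow_mul', PowerSeries.coeff_mk]
  | (m+3) =>
    have h := hrec (m+1) (by omega)
    norm_num [PowerSeries.coeff_X_pow, PowerSeries.coeff_X, PowerSeries.coeff_C_mul,
      PowerSeries.coeff_X_pow_mul', PowerSeries.coeff_mk,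
      show m+3-1 = m+2 from rfl, show m+3-2 = m+1 from rfl, h]
    rw [if_neg (by omega : ¬m + 3 = 1), if_neg (by omega : ¬m + 3 = 2)]; ring
end

section
/- Define q : ℕ → ℝ by q(3) = 9/32, q(4) = 47/256, and q(n+2) = (3/4) q(n+1) - (1/16) q(n) for n ≥ 3. Then (1/n) * log(q(n)) converges to log((3+√5)/8) as n tends to infinity. -/
theorem cycle_h_limit (q : ℕ → ℝ)
    (hq3 : q 3 = 9 / 32) (hq4 : q 4 = 47 / 256)
    (hrec : ∀ n, 3 ≤ n → q (n + 2) = (3 / 4) * q (n + 1) - (1 / 16) * q n) :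
    Filter.Tendsto (fun n : ℕ => (1 / (n : ℝ)) * Real.log (q n)) Filter.atTop
      (nhds (Real.log ((3 + Real.sqrt 5) / 8))) := by
  set s : ℝ := Real.sqrt 5 with hs
  have h5 : s ^ 2 = 5 := Real.sq_sqrt (by norm_num)
  have hs0 : 0 < s := Real.sqrt_pos.mpr (by norm_num)
  have hs3 : s < 3 := by nlinarith
  set α : ℝ := (3 + s) / 8 with hαdef
  set β : ℝ := (3 - s) / 8 with hβdef
  have hαpos : 0 < α := by rw [hαdef]; linarith
  have hβpos : 0 < β := by rw [hβdef]; linarith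
  have hβα : β < α := by rw [hαdef, hβdef]; linarith
  have hα2 : α ^ 2 = (3 / 4) * α - 1 / 16 := by
    rw [hαdef]; linear_combination (1/64) * h5
  have hβ2 : β ^ 2 = (3 / 4) * β - 1 / 16 := by
    rw [hβdef]; linear_combination (1/64) * h5
  -- closed form
  have key : ∀ n : ℕ, q (n + 3) = α ^ (n + 3) + β ^ (n + 3) ∧
      q (n + 4) = α ^ (n + 4) + β ^ (n + 4) := by
    intro n
    induction n with
    | zero =>
      constructor
      · rw [hq3, hαdef, hβdef]; linear_combination (-9/256) * h5
      · rw [hq4, hαdef, hβdef]; linear_combination (-(s^2 + 59)/2048) * h5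
    | succ m ih =>
      refine ⟨ih.2, ?_⟩
      have h := hrec (m + 3) (by omega)
      have h1 : m + 3 + 2 = m + 1 + 4 := by omega
      rw [h1] at h
      have h2 : m + 3 + 1 = m + 4 := by omega
      rw [h2] at h
      rw [h, ih.1, ih.2]
      linear_combination (-(α ^ (m + 3))) * hα2 + (-(β ^ (m + 3))) * hβ2
  set r : ℝ := β / α with hr
  clear_value r β α s
  have hr0 : 0 < r := by rw [hr]; exact div_pos hβpos hαpos
  have hr1 : r < 1 := by rw [hr]; exact (div_lt_one hαpos).mpr hβα
  have h1 : Filter.Tendsto (fun n : ℕ => r ^ n) Filter.atTop (nhds 0) :=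
    tendsto_pow_atTop_nhds_zero_of_lt_one hr0.le hr1
  have h2 : Filter.Tendsto (fun n : ℕ => Real.log (1 + r ^ n)) Filter.atTop (nhds 0) := by
    have hc : Filter.Tendsto (fun n : ℕ => 1 + r ^ n) Filter.atTop (nhds 1) := by
      have := Filter.Tendsto.add (tendsto_const_nhds (x := (1:ℝ)) (f := Filter.atTop (α := ℕ))) h1
      simpa using this
    have := (Real.continuousAt_log one_ne_zero).tendsto.comp hc
    rw [Real.log_one] at this; exact this
  have h3 : Filter.Tendsto (fun n : ℕ => 1 / (n : ℝ)) Filter.atTop (nhds 0) :=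
    tendsto_one_div_atTop_nhds_zero_nat
  have h4 : Filter.Tendsto (fun n : ℕ => 1 / (n : ℝ) * Real.log (1 + r ^ n))
      Filter.atTop (nhds 0) := by
    have := h3.mul h2
    simpa using this
  have h5' : Filter.Tendsto (fun n : ℕ => Real.log α + 1 / (n : ℝ) * Real.log (1 + r ^ n))
      Filter.atTop (nhds (Real.log α)) := by
    have := (tendsto_const_nhds (x := Real.log α) (f := Filter.atTop (α := ℕ))).add h4
    simpa using this
  have heq : ∀ᶠ n : ℕ in Filter.atTop,
      Real.log α + 1 / (n : ℝ) * Real.log (1 + r ^ n)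
        = 1 / (n : ℝ) * Real.log (q n) := by
    filter_upwards [Filter.eventually_ge_atTop 3] with n hn
    obtain ⟨m, rfl⟩ : ∃ m, n = m + 3 := ⟨n - 3, by omega⟩
    rw [(key m).1]
    have hq : α ^ (m + 3) + β ^ (m + 3) = α ^ (m + 3) * (1 + r ^ (m + 3)) := by
      rw [hr, div_pow]
      field_simp
    rw [hq, Real.log_mul (by positivity) (by positivity), Real.log_pow]
    have hn0 : ((m + 3 : ℕ) : ℝ) ≠ 0 := by positivity
    push_cast at hn0 ⊢
    field_simp

  exact Filter.Tendsto.congr' heq h5'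
end
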